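/- Let Q be an n×n real matrix and R an m×m real symmetric matrix, let J be a finite index set with m×m real matrices R_j for j ∈ J, and let q, λmin, λmax, r_j, M be positive reals with λmax ≥ 1 satisfying: q·‖x‖² ≤ xᵀQx for all x ∈ ℝⁿ; λmin·‖y‖² ≤ yᵀRy ≤ λmax·‖y‖² for all y ∈ ℝᵐ; and r_j·‖y‖² ≤ yᵀR_jy for all y ∈ ℝᵐ and j ∈ J. Let e, δ ∈ ℝⁿ and u*, v, u_j ∈ ℝᵐ satisfy ‖u* − v‖ ≤ M‖δ‖ and the event-triggering condition λmax²·M²·‖δ‖² ≤ Σ_{j∈J} r_j‖u_j‖² + λmin‖v‖². Then −eᵀQe − Σ_{j∈J} u_jᵀR_j u_j + (u* − v)ᵀR(u* − v) − vᵀRv ≤ −q·‖e‖². -/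

import Mathlib

open Matrix

/-- Algebraic core of inequalities (20)–(21) in Theorem 1: under the
Lipschitz sampling bound `‖u* - v‖ ≤ M‖δ‖` and the event-triggering condition
`λmax²·M²·‖δ‖² ≤ Σ_j r_j‖u_j‖² + λmin‖v‖²` (with `λmax ≥ 1` and the stated
quadratic-form bounds for `Q`, `R`, `R_j`), one has
`-eᵀQe - Σ_j u_jᵀR_j u_j + (u* - v)ᵀR(u* - v) - vᵀRv ≤ -q·‖e‖²`. -/
theorem stmt_5 (n m : ℕ) (Q : Matrix (Fin n) (Fin n) ℝ) (R : Matrix (Fin m) (Fin m) ℝ)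
    (hRsymm : R.IsSymm)
    (J : Type*) [Fintype J] (Rj : J → Matrix (Fin m) (Fin m) ℝ)
    (q lammin lammax : ℝ) (r : J → ℝ) (M : ℝ)
    (hq : 0 < q) (hlammin : 0 < lammin) (hlammax : 0 < lammax) (hr : ∀ j, 0 < r j)
    (hM : 0 < M) (hlammax1 : 1 ≤ lammax)
    (hQ : ∀ x : EuclideanSpace ℝ (Fin n), q * ‖x‖ ^ 2 ≤ x ⬝ᵥ Q.mulVec x)
    (hRlow : ∀ y : EuclideanSpace ℝ (Fin m), lammin * ‖y‖ ^ 2 ≤ y ⬝ᵥ R.mulVec y)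
    (hRhigh : ∀ y : EuclideanSpace ℝ (Fin m), y ⬝ᵥ R.mulVec y ≤ lammax * ‖y‖ ^ 2)
    (hRj : ∀ (j : J) (y : EuclideanSpace ℝ (Fin m)), r j * ‖y‖ ^ 2 ≤ y ⬝ᵥ (Rj j).mulVec y)
    (e δ : EuclideanSpace ℝ (Fin n)) (ustar v : EuclideanSpace ℝ (Fin m))
    (uj : J → EuclideanSpace ℝ (Fin m))
    (hLip : ‖ustar - v‖ ≤ M * ‖δ‖)
    (hTrig : lammax ^ 2 * M ^ 2 * ‖δ‖ ^ 2 ≤ ∑ j, r j * ‖uj j‖ ^ 2 + lammin * ‖v‖ ^ 2) :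
    -(e ⬝ᵥ Q.mulVec e) - ∑ j, (uj j) ⬝ᵥ (Rj j).mulVec (uj j)
      + (ustar - v) ⬝ᵥ R.mulVec (ustar - v) - v ⬝ᵥ R.mulVec v ≤ -q * ‖e‖ ^ 2 := by
  have h1 : (ustar - v) ⬝ᵥ R.mulVec (ustar - v) ≤ lammax ^ 2 * M ^ 2 * ‖δ‖ ^ 2 := by
    have := hRhigh (ustar - v)
    have h2 : ‖ustar - v‖ ^ 2 ≤ (M * ‖δ‖) ^ 2 := by
      have := norm_nonneg (ustar - v)
      nlinarith
    simp only [WithLp.ofLp_sub] at this ⊢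
    nlinarith [mul_le_mul_of_nonneg_left h2 hlammax.le, mul_nonneg (by nlinarith : (0:ℝ) ≤ lammax ^ 2 - lammax) (sq_nonneg (M * ‖δ‖))]
  have h3 : ∑ j, r j * ‖uj j‖ ^ 2 ≤ ∑ j, (uj j) ⬝ᵥ (Rj j).mulVec (uj j) :=
    Finset.sum_le_sum fun j _ => hRj j (uj j)
  have h4 := hRlow v
  have h5 := hQ e
  linarith
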